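/- For every integer k ≥ 1, the smooth Fano 2k-polytopes V^{2k}, Ṽ^{2k}, and T^{2k} are pairwise I-equivalent. -/

import Mathlib

/-! ## Basic definitions: lattice polytopes, smooth Fano polytopes,
unimodular equivalence, F- and I-equivalence, primitive collections. -/

/-- A point of `ℝ^n` all of whose coordinates are integers. -/
def IsLatticePoint {n : ℕ} (x : Fin n → ℝ) : Prop := ∀ i, ∃ m : ℤ, x i = (m : ℝ)

/-- The vertex set of a polytope: its extreme points. -/
def vertexSet {n : ℕ} (P : Set (Fin n → ℝ)) : Set (Fin n → ℝ) :=
  Set.extremePoints ℝ P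

/-- A lattice `n`-polytope: the convex hull of finitely many lattice points,
of full dimension `n`. -/
def IsLatticePolytope {n : ℕ} (P : Set (Fin n → ℝ)) : Prop :=
  (∃ S : Finset (Fin n → ℝ), (∀ x ∈ S, IsLatticePoint x) ∧
    P = convexHull ℝ (S : Set (Fin n → ℝ))) ∧
  affineSpan ℝ P = ⊤

/-- A face of `P`: an exposed subset of `P`. -/
def IsFaceOf {n : ℕ} (F P : Set (Fin n → ℝ)) : Prop := IsExposed ℝ P F

/-- A facet of `P`: a face of affine dimension `n - 1`. -/
def IsFacetOf {n : ℕ} (F P : Set (Fin n → ℝ)) : Prop :=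
  IsFaceOf F P ∧ Module.finrank ℝ (vectorSpan ℝ F) + 1 = n

/-- A set `S` of points of `ℝ^n` forms a `ℤ`-basis of `ℤ^n`:
it consists of `n` lattice points whose matrix has determinant `±1`. -/
def IsUnimodularBasis {n : ℕ} (S : Set (Fin n → ℝ)) : Prop :=
  ∃ b : Fin n → (Fin n → ℝ), Function.Injective b ∧ Set.range b = S ∧
    (∀ i, IsLatticePoint (b i)) ∧ |(Matrix.of b).det| = 1

/-- A smooth Fano `n`-polytope: a lattice `n`-polytope with the origin in its
interior such that the vertex set of every facet is a `ℤ`-basis of `ℤ^n`. -/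
def IsSmoothFano {n : ℕ} (P : Set (Fin n → ℝ)) : Prop :=
  IsLatticePolytope P ∧ (0 : Fin n → ℝ) ∈ interior P ∧
    ∀ F : Set (Fin n → ℝ), IsFacetOf F P → IsUnimodularBasis (vertexSet P ∩ F)

/-- Two subsets of `ℝ^n` are unimodularly equivalent if an affine map of `ℝ^n`
mapping `ℤ^n` onto `ℤ^n` maps one onto the other. -/
def UnimodularEquiv {n : ℕ} (Q Q' : Set (Fin n → ℝ)) : Prop :=
  ∃ φ : (Fin n → ℝ) →ᵃ[ℝ] (Fin n → ℝ),
    φ '' {x | IsLatticePoint x} = {x | IsLatticePoint x} ∧ φ '' Q = Q'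

/-- One step of an I-sequence: the vertex set of one polytope is obtained from
the vertex set of the other by adding one new lattice point. -/
def IStep {n : ℕ} (P Q : Set (Fin n → ℝ)) : Prop :=
  (∃ w : Fin n → ℝ, IsLatticePoint w ∧ w ∉ vertexSet P ∧
    vertexSet Q = vertexSet P ∪ {w}) ∨
  (∃ w : Fin n → ℝ, IsLatticePoint w ∧ w ∉ vertexSet Q ∧
    vertexSet P = vertexSet Q ∪ {w})

/-- I-equivalence of smooth Fano `n`-polytopes. -/
def IEquiv {n : ℕ} (P Q : Set (Fin n → ℝ)) : Prop :=
  ∃ (k : ℕ) (c : Fin (k + 1) → Set (Fin n → ℝ)),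
    (∀ i, IsSmoothFano (c i)) ∧
    UnimodularEquiv P (c 0) ∧ UnimodularEquiv Q (c (Fin.last k)) ∧
    ∀ i : Fin k, IStep (c i.castSucc) (c i.succ)

/-- `Q` is the stellar subdivision of `P` at the new vertex `w`: `w` is the sum
of the vertices of a proper face `F` of `P`, and the facets of `Q` containing
`w` are exactly the sets `conv({w} ∪ (V(F') \ {v}))` for `F'` a facet of `P`
containing `F` and `v` a vertex of `F`. -/
def IsStellarSubdivisionAt {n : ℕ} (P Q : Set (Fin n → ℝ)) (w : Fin n → ℝ) : Prop :=
  ∃ F : Set (Fin n → ℝ), IsFaceOf F P ∧ F.Nonempty ∧ F ≠ P ∧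
    w = ∑ᶠ v ∈ vertexSet P ∩ F, v ∧
    {G : Set (Fin n → ℝ) | IsFacetOf G Q ∧ w ∈ G} =
      {G : Set (Fin n → ℝ) | ∃ F' v, IsFacetOf F' P ∧ F ⊆ F' ∧
        v ∈ vertexSet P ∩ F ∧
        G = convexHull ℝ (insert w ((vertexSet P ∩ F') \ {v}))}

/-- One step of an F-sequence: an I-step which moreover is a stellar
subdivision (or its inverse). -/
def FStep {n : ℕ} (P Q : Set (Fin n → ℝ)) : Prop :=
  (∃ w : Fin n → ℝ, IsLatticePoint w ∧ w ∉ vertexSet P ∧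
    vertexSet Q = vertexSet P ∪ {w} ∧ IsStellarSubdivisionAt P Q w) ∨
  (∃ w : Fin n → ℝ, IsLatticePoint w ∧ w ∉ vertexSet Q ∧
    vertexSet P = vertexSet Q ∪ {w} ∧ IsStellarSubdivisionAt Q P w)

/-- F-equivalence of smooth Fano `n`-polytopes. -/
def FEquiv {n : ℕ} (P Q : Set (Fin n → ℝ)) : Prop :=
  ∃ (k : ℕ) (c : Fin (k + 1) → Set (Fin n → ℝ)),
    (∀ i, IsSmoothFano (c i)) ∧
    UnimodularEquiv P (c 0) ∧ UnimodularEquiv Q (c (Fin.last k)) ∧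
    ∀ i : Fin k, FStep (c i.castSucc) (c i.succ)

/-- A smooth Fano polytope is F-isolated if every smooth Fano polytope
F-equivalent to it is unimodularly equivalent to it. -/
def FIsolated {n : ℕ} (P : Set (Fin n → ℝ)) : Prop :=
  ∀ Q : Set (Fin n → ℝ), IsSmoothFano Q → FEquiv Q P → UnimodularEquiv Q P

/-- A smooth Fano polytope is I-isolated if every smooth Fano polytope
I-equivalent to it is unimodularly equivalent to it. -/
def IIsolated {n : ℕ} (P : Set (Fin n → ℝ)) : Prop :=
  ∀ Q : Set (Fin n → ℝ), IsSmoothFano Q → IEquiv Q P → UnimodularEquiv Q P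

/-- A primitive collection of a smooth Fano polytope `P`: a nonempty set `A` of
vertices such that `conv(A)` is not a face of `P` but `conv(A \ {x})` is a face
of `P` for every `x ∈ A`. -/
def IsPrimitiveCollection {n : ℕ} (P A : Set (Fin n → ℝ)) : Prop :=
  A.Nonempty ∧ A ⊆ vertexSet P ∧ ¬ IsFaceOf (convexHull ℝ A) P ∧
    ∀ x ∈ A, IsFaceOf (convexHull ℝ (A \ {x})) P

/-- The standard basis vector `e_i` of `ℝ^n`. -/
def stdBasis {n : ℕ} (i : Fin n) : Fin n → ℝ := fun q => if q = i then 1 else 0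

/-- The polytope `T^n = conv{e_1, …, e_n, -(e_1 + ⋯ + e_n)}`,
corresponding to projective `n`-space. -/
def Tpoly (n : ℕ) : Set (Fin n → ℝ) :=
  convexHull ℝ (Set.range (stdBasis (n := n)) ∪ {fun _ => (-1 : ℝ)})

/-- The polytope `V^m = conv{±e_1, …, ±e_m, ±(e_1 + ⋯ + e_m)}`. -/
def Vpoly (m : ℕ) : Set (Fin m → ℝ) :=
  convexHull ℝ
    (Set.range (stdBasis (n := m)) ∪ Set.range (fun i => -stdBasis (n := m) i) ∪
      {fun _ => (1 : ℝ), fun _ => (-1 : ℝ)})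

/-- The polytope `Ṽ^m = conv{±e_1, …, ±e_m, e_1 + ⋯ + e_m}`. -/
def Vtildepoly (m : ℕ) : Set (Fin m → ℝ) :=
  convexHull ℝ
    (Set.range (stdBasis (n := m)) ∪ Set.range (fun i => -stdBasis (n := m) i) ∪
      {fun _ => (1 : ℝ)})

namespace SFP
open Set


open Set

variable {n : ℕ}

/-- the generating set of our polytopes -/
def gS (n : ℕ) (p m : Fin n → Prop) (gp gm : Prop) : Set (Fin n → ℝ) :=
  {x | (∃ i, p i ∧ x = stdBasis i) ∨ (∃ i, m i ∧ x = -stdBasis i) ∨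
    (gp ∧ x = fun _ => (1:ℝ)) ∨ (gm ∧ x = fun _ => (-1:ℝ))}

lemma stdBasis_self (i : Fin n) : stdBasis i i = 1 := if_pos rfl
lemma stdBasis_ne {q i : Fin n} (h : q ≠ i) : stdBasis i q = 0 := if_neg h

lemma stdBasis_injective : Function.Injective (stdBasis (n := n)) := by
  intro i j h
  by_contra hij
  have := congrFun h i
  rw [stdBasis_self, stdBasis_ne hij] at this
  norm_num at this

lemma stdBasis_ne_neg (i j : Fin n) : stdBasis i ≠ -stdBasis j := by
  intro h
  have := congrFun h i
  rw [stdBasis_self] at this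
  by_cases hij : i = j
  · subst hij; rw [Pi.neg_apply, stdBasis_self] at this; norm_num at this
  · rw [Pi.neg_apply, stdBasis_ne hij] at this; norm_num at this

lemma stdBasis_ne_const (hn : 2 ≤ n) (i : Fin n) (c : ℝ) (hc : c ≠ 0) :
    stdBasis i ≠ fun _ => c := by
  intro h
  obtain ⟨j, hj⟩ : ∃ j : Fin n, j ≠ i := by
    by_cases h0 : i = ⟨0, by omega⟩
    · exact ⟨⟨1, by omega⟩, by subst h0; intro h; simpa [Fin.ext_iff] using h⟩
    · exact ⟨⟨0, by omega⟩, fun h => h0 (h ▸ rfl)⟩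
  have := congrFun h j
  rw [stdBasis_ne hj] at this
  exact hc this.symm

lemma neg_stdBasis_ne_const (hn : 2 ≤ n) (i : Fin n) (c : ℝ) (hc : c ≠ 0) :
    -stdBasis i ≠ fun _ => c := by
  intro h
  have : stdBasis i = fun _ => -c := by
    funext q; have := congrFun h q; simp only [Pi.neg_apply] at this; linarith
  exact stdBasis_ne_const hn i (-c) (by simpa using hc) this

lemma const_ne_const {c d : ℝ} (h : c ≠ d) (hn : 0 < n) :
    (fun _ : Fin n => c) ≠ fun _ => d := by
  intro he; exact h (congrFun he ⟨0, hn⟩)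

lemma gS_finite (p m : Fin n → Prop) (gp gm : Prop) : (gS n p m gp gm).Finite := by
  apply Set.Finite.subset (Set.finite_range (stdBasis (n := n)) |>.union
    ((Set.finite_range (fun i => -stdBasis (n := n) i)).union
      ((Set.finite_singleton (fun _ : Fin n => (-1:ℝ))).insert (fun _ => (1:ℝ)))))
  rintro x (⟨i, _, rfl⟩ | ⟨i, _, rfl⟩ | ⟨_, rfl⟩ | ⟨_, rfl⟩)
  · exact Or.inl ⟨i, rfl⟩
  · exact Or.inr (Or.inl ⟨i, rfl⟩)
  · exact Or.inr (Or.inr (Set.mem_insert _ _))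
  · exact Or.inr (Or.inr (Set.mem_insert_of_mem _ rfl))

lemma gS_lattice {p m : Fin n → Prop} {gp gm : Prop} {x : Fin n → ℝ}
    (hx : x ∈ gS n p m gp gm) : IsLatticePoint x := by
  rcases hx with ⟨i, _, rfl⟩ | ⟨i, _, rfl⟩ | ⟨_, rfl⟩ | ⟨_, rfl⟩
  · exact fun q => ⟨if q = i then 1 else 0, by by_cases h : q = i <;> simp [stdBasis, h]⟩
  · exact fun q => ⟨if q = i then -1 else 0, by by_cases h : q = i <;> simp [stdBasis, h]⟩
  · exact fun q => ⟨1, by norm_num⟩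
  · exact fun q => ⟨-1, by norm_num⟩

lemma pi_eq_sum_stdBasis (x : Fin n → ℝ) : x = ∑ i, x i • stdBasis i := by
  funext q
  rw [Finset.sum_apply]
  simp only [Pi.smul_apply, stdBasis, smul_eq_mul, mul_ite, mul_one, mul_zero]
  rw [Finset.sum_ite_eq Finset.univ q x]
  simp

lemma const_eq_smul_sum (c : ℝ) : (fun _ : Fin n => c) = ∑ i, c • stdBasis i := by
  have := pi_eq_sum_stdBasis (fun _ : Fin n => c)
  simpa using this


open Set
variable {n : ℕ}

noncomputable def lc (c : Fin n → ℝ) : (Fin n → ℝ) →L[ℝ] ℝ :=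
  ∑ j, (c j) • (ContinuousLinearMap.proj j : (Fin n → ℝ) →L[ℝ] ℝ)

lemma lc_apply (c x : Fin n → ℝ) : lc c x = ∑ j, c j * x j := by
  simp [lc, ContinuousLinearMap.sum_apply, ContinuousLinearMap.proj_apply]

lemma lc_stdBasis (c : Fin n → ℝ) (i : Fin n) : lc c (stdBasis i) = c i := by
  rw [lc_apply]
  simp only [stdBasis, mul_ite, mul_one, mul_zero]
  rw [Finset.sum_ite_eq' Finset.univ i c]
  simp

lemma lc_neg_stdBasis (c : Fin n → ℝ) (i : Fin n) : lc c (-stdBasis i) = -c i := by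
  rw [map_neg, lc_stdBasis]

lemma lc_const (c : Fin n → ℝ) (a : ℝ) : lc c (fun _ => a) = a * ∑ j, c j := by
  rw [lc_apply, Finset.mul_sum]
  exact Finset.sum_congr rfl fun j _ => by ring

lemma mem_convexHull_argmax {s : Set (Fin n → ℝ)} {l : (Fin n → ℝ) →L[ℝ] ℝ} {M : ℝ}
    (hmax : ∀ v ∈ s, l v ≤ M) {x : Fin n → ℝ} (hx : x ∈ convexHull ℝ s) (hxM : M ≤ l x) :
    x ∈ convexHull ℝ {v | v ∈ s ∧ l v = M} := by
  classical
  rw [convexHull_eq] at hx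
  obtain ⟨ι, t, w, z, hw0, hw1, hz, rfl⟩ := hx
  have hcm : t.centerMass w z = ∑ i ∈ t, w i • z i := Finset.centerMass_eq_of_sum_1 _ _ hw1
  have hlx : l (t.centerMass w z) = ∑ i ∈ t, w i * l (z i) := by
    rw [hcm, map_sum]; exact Finset.sum_congr rfl fun i _ => by rw [map_smul, smul_eq_mul]
  have hterm : ∀ i ∈ t, 0 ≤ w i * (M - l (z i)) := fun i hi =>
    mul_nonneg (hw0 i hi) (by linarith [hmax (z i) (hz i hi)])
  have hexp : ∑ i ∈ t, w i * (M - l (z i)) = M - l (t.centerMass w z) := by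
    rw [hlx]
    simp only [mul_sub]
    rw [Finset.sum_sub_distrib, ← Finset.sum_mul, hw1, one_mul]
  have hzero : ∑ i ∈ t, w i * (M - l (z i)) = 0 :=
    le_antisymm (by rw [hexp]; linarith) (Finset.sum_nonneg hterm)
  have hall := (Finset.sum_eq_zero_iff_of_nonneg hterm).1 hzero
  rw [show t.centerMass w z = {i ∈ t | w i ≠ 0}.centerMass w z from
    (Finset.centerMass_filter_ne_zero (t := t) (w := w) z).symm]
  apply Finset.centerMass_mem_convexHull
  · intro i hi; exact hw0 i (Finset.mem_filter.1 hi).1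
  · rw [Finset.sum_filter_ne_zero, hw1]; norm_num
  · intro i hi
    obtain ⟨hit, hwi⟩ := Finset.mem_filter.1 hi
    have := hall i hit
    rcases mul_eq_zero.1 this with h | h
    · exact absurd h hwi
    · exact ⟨hz i hit, by linarith⟩

lemma extreme_of_strict_max {s : Set (Fin n → ℝ)} {x : Fin n → ℝ} (hx : x ∈ s)
    (l : (Fin n → ℝ) →L[ℝ] ℝ) (hstrict : ∀ y ∈ s, y ≠ x → l y < l x) :
    x ∈ Set.extremePoints ℝ (convexHull ℝ s) := by
  have hmax : ∀ v ∈ s, l v ≤ l x := by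
    intro v hv
    by_cases hvx : v = x
    · subst hvx; exact le_refl _
    · exact (hstrict v hv hvx).le
  have hhs : convexHull ℝ s ⊆ {u | l u ≤ l x} :=
    convexHull_min hmax (convex_halfSpace_le ⟨l.map_add, l.map_smul⟩ _)
  have hsingle : {v | v ∈ s ∧ l v = l x} = {x} := by
    ext v
    constructor
    · rintro ⟨hv, hlv⟩
      by_contra hvx
      exact absurd hlv (ne_of_lt (hstrict v hv hvx))
    · rintro rfl; exact ⟨hx, rfl⟩
  have key : ∀ y ∈ convexHull ℝ s, l y = l x → y = x := by
    intro y hy hly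
    have := mem_convexHull_argmax hmax hy (le_of_eq hly.symm)
    rw [hsingle, convexHull_singleton] at this
    exact this
  rw [mem_extremePoints]
  refine ⟨subset_convexHull ℝ s hx, fun y hy z hz hseg => ?_⟩
  obtain ⟨a, b, ha, hb, hab, hsum⟩ := hseg
  have hly : l y ≤ l x := hhs hy
  have hlz : l z ≤ l x := hhs hz
  have hlxsum : l x = a * l y + b * l z := by
    rw [← hsum]; simp [map_add, map_smul]
  have h2 : a * l x + b * l x = l x := by rw [← add_mul, hab, one_mul]
  have hye : l y = l x := by
    by_contra h
    have h1 : a * l y < a * l x := mul_lt_mul_of_pos_left (lt_of_le_of_ne hly h) ha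
    have h3 : b * l z ≤ b * l x := mul_le_mul_of_nonneg_left hlz hb.le
    linarith
  have hze : l z = l x := by
    by_contra h
    have h1 : b * l z < b * l x := mul_lt_mul_of_pos_left (lt_of_le_of_ne hlz h) hb
    have h3 : a * l y ≤ a * l x := mul_le_mul_of_nonneg_left hly ha.le
    linarith
  exact ⟨key y hy hye, key z hz hze⟩


variable {n : ℕ}

lemma mem_convexHull_of_sum_abs_le {σ : ℝ} (hσ : σ = 1 ∨ σ = -1) {s : Set (Fin n → ℝ)}
    (he : ∀ i, σ • stdBasis i ∈ s) (hz : (fun _ => -σ) ∈ s) {x : Fin n → ℝ}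
    (hx : ∑ i, |x i| ≤ 1/(n+2)) : x ∈ convexHull ℝ s := by
  have hσ2 : σ * σ = 1 := by rcases hσ with rfl | rfl <;> norm_num
  have hσabs : |σ| = 1 := by rcases hσ with rfl | rfl <;> norm_num
  set c₀ : ℝ := (1 - σ * ∑ i, x i)/(n+1) with hc₀
  have hnpos : (0:ℝ) < n + 1 := by positivity
  have habs : |σ * ∑ i, x i| ≤ 1/(n+2) := by
    rw [abs_mul, hσabs, one_mul]
    exact le_trans (Finset.abs_sum_le_sum_abs _ _) hx
  have hc₀pos : 1/((n:ℝ)+2) ≤ c₀ := by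
    have h1 : σ * ∑ i, x i ≤ 1/(n+2) := (abs_le.1 habs).2
    have hS2 : (σ * ∑ i, x i) * (n+2) ≤ 1 :=
      (le_div_iff₀ (by positivity : (0:ℝ) < n+2)).mp h1
    rw [hc₀, le_div_iff₀ hnpos]
    have h2 : (1/((n:ℝ)+2)) * (n+1) = (n+1)/(n+2) := by ring
    rw [h2, div_le_iff₀ (by positivity : (0:ℝ) < n+2)]
    nlinarith [hS2]
  classical
  set w : Option (Fin n) → ℝ := fun o => Option.rec c₀ (fun i => c₀ + σ * x i) o with hw
  set z : Option (Fin n) → (Fin n → ℝ) :=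
    fun o => Option.rec (fun _ => -σ) (fun i => σ • stdBasis i) o with hzdef
  have hw0 : ∀ o, 0 ≤ w o := by
    rintro (_ | i)
    · show (0:ℝ) ≤ c₀
      linarith [hc₀pos, (by positivity : (0:ℝ) < 1/((n:ℝ)+2))]
    · show (0:ℝ) ≤ c₀ + σ * x i
      have h1 : |x i| ≤ ∑ j, |x j| :=
        Finset.single_le_sum (fun j _ => abs_nonneg (x j)) (Finset.mem_univ i)
      have h2 : |σ * x i| ≤ 1/(n+2) := by
        rw [abs_mul, hσabs, one_mul]; linarith
      have := (abs_le.1 h2).1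
      linarith
  have hw1 : ∑ o : Option (Fin n), w o = 1 := by
    rw [Fintype.sum_option]
    simp only [hw]
    rw [Finset.sum_add_distrib, Finset.sum_const, Finset.card_univ, Fintype.card_fin,
      ← Finset.mul_sum]
    have hc : c₀ * ((n:ℝ)+1) = 1 - σ * ∑ i, x i := by
      rw [hc₀]; exact div_mul_cancel₀ _ hnpos.ne'
    linear_combination hc
  have hcmx : Finset.univ.centerMass w z = x := by
    rw [Finset.centerMass_eq_of_sum_1 _ _ hw1]
    funext q
    rw [Finset.sum_apply]
    rw [Fintype.sum_option]
    simp only [hzdef, Pi.smul_apply, smul_eq_mul]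
    have hsum : ∑ i : Fin n, w (some i) * (σ * stdBasis i q)
        = (c₀ + σ * x q) * σ := by
      rw [Finset.sum_eq_single q]
      · simp [stdBasis, hw]
      · intro j _ hj
        simp [stdBasis, Ne.symm hj]
      · intro h; exact absurd (Finset.mem_univ q) h
    rw [hsum]
    show c₀ * (-σ) + (c₀ + σ * x q) * σ = x q
    linear_combination x q * hσ2
  rw [← hcmx]
  apply Finset.centerMass_mem_convexHull _ (fun o _ => hw0 o) (by rw [hw1]; norm_num)
  rintro (_ | i) _
  · exact hz
  · exact he i

lemma zero_mem_interior_hull {σ : ℝ} (hσ : σ = 1 ∨ σ = -1) {s : Set (Fin n → ℝ)}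
    (hn : 1 ≤ n)
    (he : ∀ i, σ • stdBasis i ∈ s) (hz : (fun _ => -σ) ∈ s) :
    (0 : Fin n → ℝ) ∈ interior (convexHull ℝ s) := by
  have hrpos : (0:ℝ) < 1/(n*(n+2)) := by positivity
  have hball : Metric.ball (0 : Fin n → ℝ) (1/(n*(n+2))) ⊆ convexHull ℝ s := by
    intro x hxb
    rw [Metric.mem_ball, dist_zero_right] at hxb
    apply mem_convexHull_of_sum_abs_le hσ he hz
    have h1 : ∀ i, |x i| ≤ ‖x‖ := fun i => by
      rw [← Real.norm_eq_abs]; exact norm_le_pi_norm x i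
    have h2 : ∑ i, |x i| ≤ n * ‖x‖ := by
      calc ∑ i, |x i| ≤ ∑ _i : Fin n, ‖x‖ := Finset.sum_le_sum fun i _ => h1 i
      _ = n * ‖x‖ := by rw [Finset.sum_const, Finset.card_univ, Fintype.card_fin,
        nsmul_eq_mul]
    have h3 : (n:ℝ) * ‖x‖ ≤ n * (1/(n*(n+2))) :=
      mul_le_mul_of_nonneg_left hxb.le (by positivity)
    have hn' : (1:ℝ) ≤ n := by exact_mod_cast hn
    have h4 : (n:ℝ) * (1/(n*(n+2))) = 1/(n+2) := by field_simp
    linarith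
  exact interior_maximal hball Metric.isOpen_ball (Metric.mem_ball_self hrpos)

lemma affineSpan_top_of_zero_mem_interior {P : Set (Fin n → ℝ)}
    (h : (0 : Fin n → ℝ) ∈ interior P) : affineSpan ℝ P = ⊤ :=
  top_unique (le_trans (isOpen_interior.affineSpan_eq_top ⟨0, h⟩).ge
    (affineSpan_mono ℝ interior_subset))

variable {n : ℕ}

lemma matrix_of_smul_diag (d : Fin n → ℝ) :
    Matrix.of (fun i => d i • stdBasis i) = Matrix.diagonal d := by
  ext i q
  simp only [Matrix.of_apply, Pi.smul_apply, smul_eq_mul, stdBasis, Matrix.diagonal_apply]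
  by_cases h : q = i
  · subst h; simp
  · simp [h, Ne.symm h]

lemma abs_det_diag (d : Fin n → ℝ) (hd : ∀ i, d i = 1 ∨ d i = -1) :
    |(Matrix.of (fun i => d i • stdBasis i)).det| = 1 := by
  rw [matrix_of_smul_diag, Matrix.det_diagonal, Finset.abs_prod]
  rw [Finset.prod_eq_one]
  intro i _
  rcases hd i with h | h <;> rw [h] <;> norm_num

lemma abs_det_update (d : Fin n → ℝ) (hd : ∀ i, d i = 1 ∨ d i = -1) (j : Fin n)
    (c : ℝ) (hc : c = 1 ∨ c = -1) :
    |(Matrix.of (Function.update (fun i => d i • stdBasis i) j (fun _ => c))).det| = 1 := by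
  have hsq : ∀ i, d i * d i = 1 := fun i => by rcases hd i with h | h <;> rw [h] <;> norm_num
  have hM : Matrix.of (Function.update (fun i => d i • stdBasis i) j (fun _ => c))
      = Matrix.updateRow (Matrix.diagonal d) j (fun _ => c) := by
    ext i q
    by_cases h : i = j
    · subst h
      simp [Matrix.updateRow_self, Function.update_self]
    · simp only [Matrix.of_apply, Function.update_of_ne h, Matrix.updateRow_ne h]
      have := congrFun (congrFun (matrix_of_smul_diag d) i) q
      simpa using this
  rw [hM]
  have hrow : (fun _ : Fin n => c) = ∑ k, (c * d k) • (Matrix.diagonal d k) := by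
    funext q
    rw [Finset.sum_apply]
    simp only [Pi.smul_apply, Matrix.diagonal_apply, smul_eq_mul, mul_ite, mul_zero]
    rw [Finset.sum_ite_eq' Finset.univ q (fun k => c * d k * d k)]
    simp [mul_assoc, hsq q]
  rw [hrow, Matrix.det_updateRow_sum, Matrix.det_diagonal]
  rw [smul_eq_mul, abs_mul, abs_mul, Finset.abs_prod]
  have h1 : |c| = 1 := by rcases hc with h | h <;> rw [h] <;> norm_num
  have h2 : ∀ i, |d i| = 1 := fun i => by rcases hd i with h | h <;> rw [h] <;> norm_num
  rw [h1, h2 j, Finset.prod_eq_one (fun i _ => h2 i)]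
  norm_num

lemma ncard_ge_of_finrank {W : Set (Fin n → ℝ)} (hfin : W.Finite) {w₀ : Fin n → ℝ}
    (hw₀ : w₀ ∈ W) (d : ℕ) (hd : d ≤ Module.finrank ℝ (vectorSpan ℝ W)) :
    d + 1 ≤ W.ncard := by
  classical
  have hspan := vectorSpan_eq_span_vsub_set_right ℝ hw₀
  set I : Set (Fin n → ℝ) := (· -ᵥ w₀) '' W with hI
  have hIfin : I.Finite := hfin.image _
  have h0I : (0 : Fin n → ℝ) ∈ I := ⟨w₀, hw₀, by simp⟩
  have hIins : I = insert 0 (I \ {0}) := by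
    rw [Set.insert_diff_singleton, Set.insert_eq_of_mem h0I]
  have hspan2 : vectorSpan ℝ W = Submodule.span ℝ (I \ {0}) := by
    rw [hspan]
    conv_lhs => rw [hIins]
    rw [Submodule.span_insert_zero]
  have hfinsub : (I \ {0}).Finite := hIfin.diff
  have hle : Module.finrank ℝ (Submodule.span ℝ (I \ {0})) ≤ (I \ {0}).ncard := by
    haveI hf : Fintype (I \ {0} : Set (Fin n → ℝ)) := hfinsub.fintype
    have h := finrank_span_le_card (R := ℝ) (I \ {0} : Set (Fin n → ℝ))
    have h2 : (I \ {0}).ncard = Fintype.card (I \ {0} : Set (Fin n → ℝ)) := by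
      rw [Set.ncard_eq_toFinset_card', Set.toFinset_card]
    have h3 : (I \ {0}).toFinset.card = Fintype.card (I \ {0} : Set (Fin n → ℝ)) :=
      Set.toFinset_card _
    rw [h2]
    exact h.trans (le_of_eq h3)
  have hcard1 : (I \ {0}).ncard = I.ncard - 1 := by
    rw [Set.ncard_diff_singleton_of_mem h0I]
  have hcard2 : I.ncard = W.ncard := Set.ncard_image_of_injective W (fun a b h => by
    have : a - w₀ = b - w₀ := h
    have := congrArg (· + w₀) this
    simpa using this)
  have hWpos : 0 < W.ncard := (Set.ncard_pos hfin).mpr ⟨w₀, hw₀⟩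
  have hd2 : d ≤ (I \ {0}).ncard := le_trans (le_trans hd (le_of_eq (by rw [hspan2]))) hle
  omega

lemma sum_ite_const (i : Fin n) (a b : ℝ) :
    ∑ j, (if j = i then a else b) = a - b + n * b := by
  have h : ∀ j : Fin n, (if j = i then a else b) = (if j = i then (a - b) else 0) + b := by
    intro j; split <;> ring
  simp only [h, Finset.sum_add_distrib, Finset.sum_ite_eq' Finset.univ i (fun _ => a - b)]
  simp [Finset.card_univ, mul_comm]

lemma vertexSet_gS (hn : 2 ≤ n) (p m : Fin n → Prop) (gp gm : Prop) :
    Set.extremePoints ℝ (convexHull ℝ (gS n p m gp gm)) = gS n p m gp gm := by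
  apply Set.Subset.antisymm (extremePoints_convexHull_subset)
  intro x hx
  have hcast : (2:ℝ) ≤ (n:ℝ) := by exact_mod_cast hn
  rcases hx with ⟨i, hpi, rfl⟩ | ⟨i, hmi, rfl⟩ | ⟨hgp, rfl⟩ | ⟨hgm, rfl⟩
  · -- x = e_i
    apply extreme_of_strict_max (Or.inl ⟨i, hpi, rfl⟩)
      (lc (fun j => if j = i then (n+1:ℝ) else -1))
    intro y hy hne
    rw [lc_stdBasis, if_pos rfl]
    rcases hy with ⟨j, _, rfl⟩ | ⟨j, _, rfl⟩ | ⟨_, rfl⟩ | ⟨_, rfl⟩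
    · rw [lc_stdBasis]
      have hji : j ≠ i := fun h => hne (by rw [h])
      rw [if_neg hji]; linarith
    · rw [lc_neg_stdBasis]; split_ifs <;> linarith
    · rw [lc_const, sum_ite_const]; ring_nf; linarith
    · rw [lc_const, sum_ite_const]; ring_nf; linarith
  · -- x = -e_i
    apply extreme_of_strict_max (Or.inr (Or.inl ⟨i, hmi, rfl⟩))
      (lc (fun j => if j = i then (-(n+1):ℝ) else 1))
    intro y hy hne
    rw [lc_neg_stdBasis, if_pos rfl]
    rcases hy with ⟨j, _, rfl⟩ | ⟨j, _, rfl⟩ | ⟨_, rfl⟩ | ⟨_, rfl⟩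
    · rw [lc_stdBasis]; split_ifs <;> linarith
    · rw [lc_neg_stdBasis]
      have hji : j ≠ i := fun h => hne (by rw [h])
      rw [if_neg hji]; linarith
    · rw [lc_const, sum_ite_const]; ring_nf; linarith
    · rw [lc_const, sum_ite_const]; ring_nf; linarith
  · -- x = 1
    apply extreme_of_strict_max (Or.inr (Or.inr (Or.inl ⟨hgp, rfl⟩)))
      (lc (fun _ => (1:ℝ)))
    intro y hy hne
    rw [lc_const]
    simp only [Finset.sum_const, Finset.card_univ, Fintype.card_fin, nsmul_eq_mul, mul_one,
      one_mul]
    rcases hy with ⟨j, _, rfl⟩ | ⟨j, _, rfl⟩ | ⟨_, rfl⟩ | ⟨_, rfl⟩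
    · rw [lc_stdBasis]; linarith
    · rw [lc_neg_stdBasis]; linarith
    · exact absurd rfl hne
    · rw [lc_const]; simp only [Finset.sum_const, Finset.card_univ, Fintype.card_fin,
        nsmul_eq_mul, mul_one]; linarith
  · -- x = -1
    apply extreme_of_strict_max (Or.inr (Or.inr (Or.inr ⟨hgm, rfl⟩)))
      (lc (fun _ => (-1:ℝ)))
    intro y hy hne
    rw [lc_const]
    simp only [Finset.sum_const, Finset.card_univ, Fintype.card_fin, nsmul_eq_mul, mul_one]
    rcases hy with ⟨j, _, rfl⟩ | ⟨j, _, rfl⟩ | ⟨_, rfl⟩ | ⟨_, rfl⟩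
    · rw [lc_stdBasis]; nlinarith
    · rw [lc_neg_stdBasis]; nlinarith
    · rw [lc_const]; simp only [Finset.sum_const, Finset.card_univ, Fintype.card_fin,
        nsmul_eq_mul, mul_one]; nlinarith
    · exact absurd rfl hne


lemma clm_apply_sum (l : (Fin n → ℝ) →L[ℝ] ℝ) (x : Fin n → ℝ) :
    l x = ∑ j, x j * l (stdBasis j) := by
  conv_lhs => rw [pi_eq_sum_stdBasis x]
  rw [map_sum]
  exact Finset.sum_congr rfl fun j _ => by rw [map_smul, smul_eq_mul]

lemma clm_const (l : (Fin n → ℝ) →L[ℝ] ℝ) (c : ℝ) :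
    l (fun _ => c) = c * ∑ j, l (stdBasis j) := by
  rw [clm_apply_sum l (fun _ => c), Finset.mul_sum]

lemma not_all_signs (hn : 1 ≤ n) (hev : Even n) {W : Set (Fin n → ℝ)} {c : ℝ}
    (hc : c = 1 ∨ c = -1) (hcW : (fun _ : Fin n => c) ∈ W)
    (hrank : Module.finrank ℝ (vectorSpan ℝ W) + 1 = n)
    (hall : ∀ j, stdBasis j ∈ W ∨ -stdBasis j ∈ W) : False := by
  classical
  set dZ : Fin n → ℤ := fun j => if stdBasis j ∈ W then 1 else -1 with hdZ
  set d : Fin n → ℝ := fun j => (dZ j : ℝ) with hd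
  have hd1 : ∀ j, d j = 1 ∨ d j = -1 := by
    intro j; by_cases h : stdBasis j ∈ W
    · left; simp [hd, hdZ, h]
    · right; simp [hd, hdZ, h]
  have hdsq : ∀ j, d j * d j = 1 := fun j => by rcases hd1 j with h | h <;> rw [h] <;> norm_num
  have hdW : ∀ j, d j • stdBasis j ∈ W := by
    intro j
    by_cases h : stdBasis j ∈ W
    · have : d j = 1 := by simp [hd, hdZ, h]
      rw [this, one_smul]; exact h
    · have : d j = -1 := by simp [hd, hdZ, h]
      rw [this, neg_one_smul]
      rcases hall j with h' | h'
      · exact absurd h' h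
      · exact h'
  set v : Fin n → (Fin n → ℝ) := fun j => d j • stdBasis j - (fun _ => c) with hv
  have hvW : ∀ j, v j ∈ vectorSpan ℝ W := by
    intro j
    have := vsub_mem_vectorSpan ℝ (hdW j) hcW
    rwa [vsub_eq_sub] at this
  -- parity : c * ∑ d ≠ 1
  set cZ : ℤ := if c = 1 then 1 else -1 with hcZ
  have hcc : c = (cZ : ℝ) := by
    rcases hc with h | h
    · simp [hcZ, h]
    · rw [hcZ, if_neg (by rw [h]; norm_num), h]; norm_num
  have hparZ : cZ * ∑ j, dZ j ≠ 1 := by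
    intro h
    have h2 := congrArg (fun z : ℤ => (z : ZMod 2)) h
    simp only [Int.cast_mul, Int.cast_sum, Int.cast_one] at h2
    have hdeq : ∀ j, ((dZ j : ZMod 2)) = 1 := by
      intro j; by_cases hj : stdBasis j ∈ W <;> simp [hdZ, hj] <;> decide
    rw [Finset.sum_congr rfl (fun j _ => hdeq j)] at h2
    obtain ⟨t, rfl⟩ := hev
    rw [Finset.sum_const, Finset.card_univ, Fintype.card_fin] at h2
    have hz : ((t + t) : ℕ) • (1 : ZMod 2) = 0 := by
      rw [nsmul_eq_mul, mul_one]
      have : ((t + t : ℕ) : ZMod 2) = 2 * (t : ZMod 2) := by push_cast; ring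
      rw [this]
      have h2' : (2 : ZMod 2) = 0 := by decide
      rw [h2', zero_mul]
    rw [hz] at h2
    have : (cZ : ZMod 2) = 1 := by
      rw [hcZ]; split <;> decide
    rw [this, one_mul] at h2
    exact absurd h2.symm (by decide)
  have hpar : c * ∑ j, d j ≠ 1 := by
    rw [hcc, hd]
    intro h
    apply hparZ
    have : ((cZ * ∑ j, dZ j : ℤ) : ℝ) = ((1 : ℤ) : ℝ) := by push_cast at h ⊢; rw [← h]
    exact_mod_cast this
  -- linear independence
  have hli : LinearIndependent ℝ v := by
    rw [Fintype.linearIndependent_iff]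
    intro g hg j
    have hcoord : ∀ q, g q * d q - c * ∑ j', g j' = 0 := by
      intro q
      have hthis := congrFun hg q
      rw [Finset.sum_apply] at hthis
      simp only [hv, Pi.smul_apply, Pi.sub_apply, smul_eq_mul, Pi.zero_apply] at hthis
      have expand : ∑ x, g x * (d x * stdBasis x q - c)
          = (∑ x, g x * d x * stdBasis x q) - c * ∑ x, g x := by
        rw [Finset.mul_sum, ← Finset.sum_sub_distrib]
        exact Finset.sum_congr rfl fun x _ => by ring
      have hone : ∑ x, g x * d x * stdBasis x q = g q * d q := by
        rw [Finset.sum_eq_single q]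
        · rw [stdBasis_self]; ring
        · intro b _ hb; rw [stdBasis_ne (Ne.symm hb)]; ring
        · intro hq; exact absurd (Finset.mem_univ q) hq
      rw [expand, hone] at hthis
      exact hthis
    set S := ∑ j', g j' with hS
    have hgq : ∀ q, g q = c * S * d q := by
      intro q
      have h1 := hcoord q
      have h2 : g q * d q * d q = c * S * d q := by
        rw [show g q * d q = c * S by linarith]
      rwa [mul_assoc, hdsq q, mul_one] at h2
    have hSsum : S = c * S * ∑ j', d j' := by
      conv_lhs => rw [hS, Finset.sum_congr rfl (fun q _ => hgq q)]
      rw [← Finset.mul_sum]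
    have hS0 : S = 0 := by
      by_contra h
      apply hpar
      have := hSsum
      rw [mul_assoc] at this
      have h2 : S * (c * ∑ j', d j') = S * 1 := by rw [mul_one]; linarith [this]
      have := mul_left_cancel₀ h h2
      linarith [this]
    rw [hgq j, hS0]; ring
  have hspanle : Submodule.span ℝ (Set.range v) ≤ vectorSpan ℝ W := by
    rw [Submodule.span_le]
    rintro _ ⟨j, rfl⟩
    exact hvW j
  have hfr : Module.finrank ℝ (Submodule.span ℝ (Set.range v)) = n := by
    rw [finrank_span_eq_card hli, Fintype.card_fin]
  have := Submodule.finrank_mono hspanle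
  rw [hfr] at this
  omega

lemma mem_gS_e {p m : Fin n → Prop} {gp gm : Prop} (i : Fin n) (h : p i) :
    stdBasis i ∈ gS n p m gp gm := Or.inl ⟨i, h, rfl⟩
lemma mem_gS_ne {p m : Fin n → Prop} {gp gm : Prop} (i : Fin n) (h : m i) :
    -stdBasis i ∈ gS n p m gp gm := Or.inr (Or.inl ⟨i, h, rfl⟩)
lemma mem_gS_one {p m : Fin n → Prop} {gp gm : Prop} (h : gp) :
    (fun _ : Fin n => (1:ℝ)) ∈ gS n p m gp gm := Or.inr (Or.inr (Or.inl ⟨h, rfl⟩))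
lemma mem_gS_negone {p m : Fin n → Prop} {gp gm : Prop} (h : gm) :
    (fun _ : Fin n => (-1:ℝ)) ∈ gS n p m gp gm := Or.inr (Or.inr (Or.inr ⟨h, rfl⟩))

lemma exists_ne_fin (hn : 2 ≤ n) (i : Fin n) : ∃ j : Fin n, j ≠ i := by
  by_cases h0 : i = ⟨0, by omega⟩
  · exact ⟨⟨1, by omega⟩, by subst h0; intro h; simpa [Fin.ext_iff] using h⟩
  · exact ⟨⟨0, by omega⟩, fun h => h0 (h ▸ rfl)⟩

theorem isSmoothFano_gS (hn : 2 ≤ n) (hev : Even n) (p m : Fin n → Prop) (gp gm : Prop)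
    (hsign : (gm ∧ ∀ i, p i) ∨ (gp ∧ ∀ i, m i)) :
    IsSmoothFano (convexHull ℝ (gS n p m gp gm)) := by
  classical
  set V := gS n p m gp gm with hVdef
  set P := convexHull ℝ V with hPdef
  have hfin : V.Finite := gS_finite p m gp gm
  have hpm : ∀ i, p i ∨ m i := by
    rcases hsign with ⟨_, hp⟩ | ⟨_, hm⟩
    · exact fun i => Or.inl (hp i)
    · exact fun i => Or.inr (hm i)
  have h0 : (0 : Fin n → ℝ) ∈ interior P := by
    rcases hsign with ⟨hgm, hp⟩ | ⟨hgp, hm⟩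
    · apply zero_mem_interior_hull (σ := 1) (Or.inl rfl) (by omega)
      · intro i; rw [one_smul]; exact mem_gS_e i (hp i)
      · show (fun _ : Fin n => -(1:ℝ)) ∈ V
        have he : (fun _ : Fin n => -(1:ℝ)) = (fun _ : Fin n => (-1:ℝ)) := by norm_num
        rw [he]; exact mem_gS_negone hgm
    · apply zero_mem_interior_hull (σ := -1) (Or.inr rfl) (by omega)
      · intro i; rw [neg_smul, one_smul]; exact mem_gS_ne i (hm i)
      · show (fun _ : Fin n => -(-1:ℝ)) ∈ V
        have he : (fun _ : Fin n => -(-1:ℝ)) = (fun _ : Fin n => (1:ℝ)) := by norm_num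
        rw [he]; exact mem_gS_one hgp
  have haff : affineSpan ℝ P = ⊤ := affineSpan_top_of_zero_mem_interior h0
  have hvert : vertexSet P = V := vertexSet_gS hn p m gp gm
  refine ⟨⟨⟨hfin.toFinset, fun x hx => gS_lattice (hfin.mem_toFinset.1 hx),
    by rw [hfin.coe_toFinset]⟩, haff⟩, h0, ?_⟩
  intro F hFfacet
  obtain ⟨hFexp, hFrank⟩ := hFfacet
  rcases Set.eq_empty_or_nonempty F with rfl | hFne
  · rw [vectorSpan_empty, finrank_bot] at hFrank; omega
  obtain ⟨l, hF⟩ := hFexp hFne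
  have hVne : V.Nonempty := by
    rcases hpm ⟨0, by omega⟩ with h | h
    · exact ⟨_, mem_gS_e _ h⟩
    · exact ⟨_, mem_gS_ne _ h⟩
  obtain ⟨v₀, hv₀V, hv₀max⟩ := Set.exists_max_image V l hfin hVne
  set M := l v₀ with hMdef
  have hPle : ∀ x ∈ P, l x ≤ M := fun x hx =>
    convexHull_min (fun v hv => hv₀max v hv) (convex_halfSpace_le ⟨l.map_add, l.map_smul⟩ M) hx
  have hv₀P : v₀ ∈ P := subset_convexHull ℝ V hv₀V
  have hFsub : F ⊆ P := hFexp.subset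
  have hFM : ∀ x ∈ F, l x = M := by
    intro x hx
    rw [hF] at hx
    exact le_antisymm (hPle x hx.1) (hx.2 v₀ hv₀P)
  set W := {v | v ∈ V ∧ l v = M} with hWdef
  have hWV : W ⊆ V := fun v hv => hv.1
  have hWfin : W.Finite := hfin.subset hWV
  have hv₀W : v₀ ∈ W := ⟨hv₀V, rfl⟩
  have hWF : W ⊆ F := by
    intro w hw
    rw [hF]
    exact ⟨subset_convexHull ℝ V hw.1, fun y hy => by rw [hw.2]; exact hPle y hy⟩
  have hFW : F ⊆ convexHull ℝ W := fun x hx =>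
    mem_convexHull_argmax (fun v hv => hv₀max v hv) (hFsub hx) (hFM x hx).ge
  have hranks : Module.finrank ℝ (vectorSpan ℝ W) + 1 = n := by
    have h1 : vectorSpan ℝ W ≤ vectorSpan ℝ F := vectorSpan_mono ℝ hWF
    have h2 : vectorSpan ℝ F ≤ vectorSpan ℝ W := by
      have h3 := vectorSpan_mono ℝ hFW
      have h4 : vectorSpan ℝ (convexHull ℝ W) = vectorSpan ℝ W := by
        rw [← direction_affineSpan, affineSpan_convexHull, direction_affineSpan]
      rwa [h4] at h3
    rw [le_antisymm h1 h2]; exact hFrank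
  have hMpos : 0 < M := by
    by_contra hM0
    push_neg at hM0
    have hlam0 : ∀ i, l (stdBasis i) = 0 := by
      rcases hsign with ⟨hgm, hp⟩ | ⟨hgp, hm⟩
      · have hle : ∀ i, l (stdBasis i) ≤ 0 := fun i =>
          (hv₀max _ (mem_gS_e i (hp i))).trans hM0
        have hsum : -∑ j, l (stdBasis j) ≤ 0 := by
          have h := (hv₀max _ (mem_gS_negone hgm)).trans hM0
          rwa [clm_const, neg_one_mul] at h
        intro i
        exact (Finset.sum_eq_zero_iff_of_nonpos (fun j _ => hle j)).1
          (le_antisymm (Finset.sum_nonpos (fun j _ => hle j)) (by linarith)) i (Finset.mem_univ i)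
      · have hle : ∀ i, 0 ≤ l (stdBasis i) := by
          intro i
          have h := (hv₀max _ (mem_gS_ne i (hm i))).trans hM0
          rw [map_neg] at h; linarith
        have hsum : ∑ j, l (stdBasis j) ≤ 0 := by
          have h := (hv₀max _ (mem_gS_one hgp)).trans hM0
          rwa [clm_const, one_mul] at h
        intro i
        exact (Finset.sum_eq_zero_iff_of_nonneg (fun j _ => hle j)).1
          (le_antisymm hsum (Finset.sum_nonneg (fun j _ => hle j))) i (Finset.mem_univ i)
    have hl0 : ∀ x, l x = 0 := by
      intro x; rw [clm_apply_sum l x]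
      exact Finset.sum_eq_zero fun j _ => by rw [hlam0 j, mul_zero]
    have hFP : F = P := by
      rw [hF]
      ext x
      simp only [Set.mem_setOf_eq]
      exact ⟨fun h => h.1, fun h => ⟨h, fun y _ => by rw [hl0 y, hl0 x]⟩⟩
    have htop : vectorSpan ℝ F = ⊤ := by
      rw [hFP, ← direction_affineSpan, haff, AffineSubspace.direction_top]
    rw [htop, finrank_top, Module.finrank_fin_fun] at hFrank
    omega
  have hexcl : ∀ i, stdBasis i ∈ W → -stdBasis i ∈ W → False := by
    intro i h1 h2
    have e1 := h1.2
    have e2 := h2.2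
    rw [map_neg, e1] at e2
    linarith
  have hexclc : (fun _ : Fin n => (1:ℝ)) ∈ W → (fun _ : Fin n => (-1:ℝ)) ∈ W → False := by
    intro h1 h2
    have e1 := h1.2
    have e2 := h2.2
    rw [clm_const, one_mul] at e1
    rw [clm_const, neg_one_mul] at e2
    linarith
  have hncard : n ≤ W.ncard := by
    have h := ncard_ge_of_finrank hWfin hv₀W (n-1) (by omega)
    omega
  have hvwf : vertexSet P ∩ F = W := by
    apply Set.Subset.antisymm
    · rintro x ⟨hx1, hx2⟩
      rw [hvert] at hx1
      exact ⟨hx1, hFM x hx2⟩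
    · intro w hw
      exact ⟨by rw [hvert]; exact hWV hw, hWF hw⟩
  rw [hvwf]
  -- the sign pattern function
  set f : Fin n → (Fin n → ℝ) :=
    fun j => if stdBasis j ∈ W then stdBasis j else -stdBasis j with hfdef
  set d : Fin n → ℝ := fun j => if stdBasis j ∈ W then 1 else -1 with hddef
  have hd1 : ∀ j, d j = 1 ∨ d j = -1 := by
    intro j; by_cases h : stdBasis j ∈ W
    · left; simp [hddef, h]
    · right; simp [hddef, h]
  have hfd : f = fun j => d j • stdBasis j := by
    funext j
    by_cases h : stdBasis j ∈ W <;> simp [hfdef, hddef, h]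
  have hfj : ∀ j q, q ≠ j → f j q = 0 := by
    intro j q hq
    by_cases h : stdBasis j ∈ W <;>
      simp [hfdef, h, stdBasis_ne hq]
  have hfjj : ∀ j, f j j ≠ 0 := by
    intro j
    by_cases h : stdBasis j ∈ W <;>
      simp [hfdef, h, stdBasis_self]
  have hfinj : Function.Injective f := by
    intro a b hab
    by_contra hne
    have h1 := congrFun hab a
    rw [hfj b a (fun h => hne (h ▸ rfl))] at h1
    exact hfjj a h1
  have hform : ∀ w ∈ W, (∃ j, w = f j) ∨
      w = (fun _ : Fin n => (1:ℝ)) ∨ w = (fun _ : Fin n => (-1:ℝ)) := by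
    intro w hw
    rcases hWV hw with ⟨j, _, rfl⟩ | ⟨j, _, rfl⟩ | ⟨_, rfl⟩ | ⟨_, rfl⟩
    · refine Or.inl ⟨j, ?_⟩
      have : stdBasis j ∈ W := hw
      simp [hfdef, this]
    · refine Or.inl ⟨j, ?_⟩
      have h2 : -stdBasis j ∈ W := hw
      have h1 : stdBasis j ∉ W := fun h => hexcl j h h2
      simp [hfdef, h1]
    · exact Or.inr (Or.inl rfl)
    · exact Or.inr (Or.inr rfl)
  have hcard_univ_diff : ∀ (s : Set (Fin n)), (Set.univ \ s).ncard = n - s.ncard := by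
    intro s
    rw [Set.ncard_diff (Set.subset_univ s) (Set.toFinite s), Set.ncard_univ,
      Nat.card_eq_fintype_card, Fintype.card_fin]
  by_cases hconst : ∃ c : ℝ, (c = 1 ∨ c = -1) ∧ (fun _ : Fin n => c) ∈ W
  · -- a constant vertex lies on the facet
    obtain ⟨c, hc, hcW⟩ := hconst
    have hnotall : ¬ ∀ j, stdBasis j ∈ W ∨ -stdBasis j ∈ W := by
      intro hall
      exact not_all_signs (by omega) hev hc hcW hranks hall
    push_neg at hnotall
    obtain ⟨j₀, hj₀⟩ := hnotall
    have hWsub : ∀ (j : Fin n), j ≠ j₀ → (stdBasis j ∉ W ∧ -stdBasis j ∉ W) → False := by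
      intro j hj hmiss
      have hsubset : W ⊆ insert (fun _ : Fin n => c)
          (f '' (Set.univ \ ({j₀, j} : Set (Fin n)))) := by
        intro w hw
        rcases hform w hw with ⟨j', rfl⟩ | rfl | rfl
        · right
          refine ⟨j', ⟨Set.mem_univ _, ?_⟩, rfl⟩
          intro hj'
          have hfjW : f j' ∈ W := hw
          rcases hj' with rfl | rfl
          · by_cases h : stdBasis j' ∈ W
            · exact hj₀.1 (by simpa [hfdef, h] using h)
            · rw [hfdef] at hfjW; simp only [if_neg h] at hfjW
              exact hj₀.2 hfjW
          · by_cases h : stdBasis j' ∈ W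
            · exact hmiss.1 h
            · rw [hfdef] at hfjW; simp only [if_neg h] at hfjW
              exact hmiss.2 hfjW
        · rcases hc with rfl | rfl
          · exact Or.inl rfl
          · exact absurd (hexclc hw hcW) (fun h => h)
        · rcases hc with rfl | rfl
          · exact absurd (hexclc hcW hw) (fun h => h)
          · exact Or.inl rfl
      have hb1 : W.ncard ≤ 1 + (n - 2) := by
        calc W.ncard ≤ (insert (fun _ : Fin n => c)
            (f '' (Set.univ \ ({j₀, j} : Set (Fin n))))).ncard :=
          Set.ncard_le_ncard hsubset (Set.Finite.insert _ (Set.finite_univ.diff.image f))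
        _ ≤ 1 + (f '' (Set.univ \ ({j₀, j} : Set (Fin n)))).ncard := by
            have := Set.ncard_insert_le (fun _ : Fin n => c)
              (f '' (Set.univ \ ({j₀, j} : Set (Fin n))))
            omega
        _ ≤ 1 + (Set.univ \ ({j₀, j} : Set (Fin n))).ncard := by
            have := Set.ncard_image_le (s := Set.univ \ ({j₀, j} : Set (Fin n))) (f := f)
              Set.finite_univ.diff
            omega
        _ = 1 + (n - 2) := by
            rw [hcard_univ_diff, Set.ncard_pair (Ne.symm hj)]
      omega
    -- every index other than j₀ carries a sign
    have hsigns : ∀ j, j ≠ j₀ → (stdBasis j ∈ W ∨ -stdBasis j ∈ W) := by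
      intro j hj
      by_contra hmiss
      push_neg at hmiss
      exact hWsub j hj hmiss
    set b : Fin n → (Fin n → ℝ) := Function.update f j₀ (fun _ : Fin n => c) with hbdef
    have hbW : ∀ j, b j ∈ W := by
      intro j
      by_cases hj : j = j₀
      · subst hj; rw [hbdef, Function.update_self]; exact hcW
      · rw [hbdef, Function.update_of_ne hj]
        rcases hsigns j hj with h | h
        · simpa [hfdef, h] using h
        · have h1 : stdBasis j ∉ W := fun h' => hexcl j h' h
          rw [hfdef]; simp only [if_neg h1]; exact h
    refine ⟨b, ?_, ?_, fun j => gS_lattice (hWV (hbW j)), ?_⟩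
    · -- injective
      intro a a' hab
      by_cases ha : a = j₀ <;> by_cases ha' : a' = j₀
      · rw [ha, ha']
      · exfalso
        subst ha
        rw [hbdef, Function.update_self, Function.update_of_ne ha'] at hab
        obtain ⟨q, hq⟩ := exists_ne_fin hn a'
        have := congrFun hab q
        rw [hfj a' q hq] at this
        rcases hc with rfl | rfl <;> norm_num at this
      · exfalso
        subst ha'
        rw [hbdef, Function.update_self, Function.update_of_ne ha] at hab
        obtain ⟨q, hq⟩ := exists_ne_fin hn a
        have := congrFun hab q
        rw [hfj a q hq] at this
        rcases hc with rfl | rfl <;> norm_num at this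
      · rw [hbdef, Function.update_of_ne ha, Function.update_of_ne ha'] at hab
        exact hfinj hab
    · -- range = W
      apply Set.Subset.antisymm
      · rintro _ ⟨j, rfl⟩; exact hbW j
      · intro w hw
        rcases hform w hw with ⟨j', rfl⟩ | rfl | rfl
        · have hfjW : f j' ∈ W := hw
          have hj' : j' ≠ j₀ := by
            intro h; subst h
            by_cases h : stdBasis j' ∈ W
            · exact hj₀.1 h
            · rw [hfdef] at hfjW; simp only [if_neg h] at hfjW
              exact hj₀.2 hfjW
          exact ⟨j', by rw [hbdef, Function.update_of_ne hj']⟩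
        · refine ⟨j₀, ?_⟩
          rw [hbdef, Function.update_self]
          rcases hc with rfl | rfl
          · rfl
          · exact absurd (hexclc hw hcW) (fun h => h)
        · refine ⟨j₀, ?_⟩
          rw [hbdef, Function.update_self]
          rcases hc with rfl | rfl
          · exact absurd (hexclc hcW hw) (fun h => h)
          · rfl
    · -- determinant
      have hbu : b = Function.update (fun i => d i • stdBasis i) j₀ (fun _ : Fin n => c) := by
        rw [hbdef, hfd]
      rw [hbu]
      exact abs_det_update d hd1 j₀ c hc
  · -- no constant vertex on the facet
    push_neg at hconst
    have hno1 : (fun _ : Fin n => (1:ℝ)) ∉ W := fun h => hconst 1 (Or.inl rfl) h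
    have hnom1 : (fun _ : Fin n => (-1:ℝ)) ∉ W := fun h => hconst (-1) (Or.inr rfl) h
    have hallA : ∀ j, stdBasis j ∈ W ∨ -stdBasis j ∈ W := by
      intro j
      by_contra hmiss
      push_neg at hmiss
      have hsubset : W ⊆ f '' (Set.univ \ ({j} : Set (Fin n))) := by
        intro w hw
        rcases hform w hw with ⟨j', rfl⟩ | rfl | rfl
        · refine ⟨j', ⟨Set.mem_univ _, ?_⟩, rfl⟩
          intro hj'
          have hj'' : j' = j := hj'
          subst hj''
          have hfjW : f j' ∈ W := hw
          by_cases h : stdBasis j' ∈ W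
          · exact hmiss.1 h
          · rw [hfdef] at hfjW; simp only [if_neg h] at hfjW
            exact hmiss.2 hfjW
        · exact absurd hw hno1
        · exact absurd hw hnom1
      have hb1 : W.ncard ≤ n - 1 := by
        calc W.ncard ≤ (f '' (Set.univ \ ({j} : Set (Fin n)))).ncard :=
          Set.ncard_le_ncard hsubset (Set.finite_univ.diff.image f)
        _ ≤ (Set.univ \ ({j} : Set (Fin n))).ncard :=
          Set.ncard_image_le Set.finite_univ.diff
        _ = n - 1 := by rw [hcard_univ_diff, Set.ncard_singleton]
      omega
    have hfW : ∀ j, f j ∈ W := by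
      intro j
      by_cases h : stdBasis j ∈ W
      · simpa [hfdef, h] using h
      · rw [hfdef]; simp only [if_neg h]
        rcases hallA j with h' | h'
        · exact absurd h' h
        · exact h'
    refine ⟨f, hfinj, ?_, fun j => gS_lattice (hWV (hfW j)), ?_⟩
    · apply Set.Subset.antisymm
      · rintro _ ⟨j, rfl⟩; exact hfW j
      · intro w hw
        rcases hform w hw with ⟨j', rfl⟩ | rfl | rfl
        · exact ⟨j', rfl⟩
        · exact absurd hw hno1
        · exact absurd hw hnom1
    · rw [hfd]
      exact abs_det_diag d hd1

/-! ### set algebra for generator sets -/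

lemma gS_ext {p p' m m' : Fin n → Prop} {gp gp' gm gm' : Prop}
    (h1 : ∀ i, p i ↔ p' i) (h2 : ∀ i, m i ↔ m' i) (h3 : gp ↔ gp') (h4 : gm ↔ gm') :
    gS n p m gp gm = gS n p' m' gp' gm' := by
  ext x
  constructor
  · rintro (⟨i,h,rfl⟩|⟨i,h,rfl⟩|⟨h,rfl⟩|⟨h,rfl⟩)
    · exact mem_gS_e i ((h1 i).1 h)
    · exact mem_gS_ne i ((h2 i).1 h)
    · exact mem_gS_one (h3.1 h)
    · exact mem_gS_negone (h4.1 h)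
  · rintro (⟨i,h,rfl⟩|⟨i,h,rfl⟩|⟨h,rfl⟩|⟨h,rfl⟩)
    · exact mem_gS_e i ((h1 i).2 h)
    · exact mem_gS_ne i ((h2 i).2 h)
    · exact mem_gS_one (h3.2 h)
    · exact mem_gS_negone (h4.2 h)

lemma gS_union_negone (p m : Fin n → Prop) (gp : Prop) :
    gS n p m gp True = gS n p m gp False ∪ {fun _ : Fin n => (-1:ℝ)} := by
  ext x
  constructor
  · rintro (⟨i,h,rfl⟩|⟨i,h,rfl⟩|⟨h,rfl⟩|⟨_,rfl⟩)
    · exact Or.inl (mem_gS_e i h)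
    · exact Or.inl (mem_gS_ne i h)
    · exact Or.inl (mem_gS_one h)
    · exact Or.inr rfl
  · rintro (h|h)
    · rcases h with ⟨i,h,rfl⟩|⟨i,h,rfl⟩|⟨h,rfl⟩|⟨h,_⟩
      · exact mem_gS_e i h
      · exact mem_gS_ne i h
      · exact mem_gS_one h
      · exact h.elim
    · rw [Set.mem_singleton_iff] at h
      rw [h]
      exact mem_gS_negone trivial

lemma gS_union_one (p m : Fin n → Prop) (gm : Prop) :
    gS n p m True gm = gS n p m False gm ∪ {fun _ : Fin n => (1:ℝ)} := by
  ext x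
  constructor
  · rintro (⟨i,h,rfl⟩|⟨i,h,rfl⟩|⟨_,rfl⟩|⟨h,rfl⟩)
    · exact Or.inl (mem_gS_e i h)
    · exact Or.inl (mem_gS_ne i h)
    · exact Or.inr rfl
    · exact Or.inl (mem_gS_negone h)
  · rintro (h|h)
    · rcases h with ⟨i,h,rfl⟩|⟨i,h,rfl⟩|⟨h,_⟩|⟨h,rfl⟩
      · exact mem_gS_e i h
      · exact mem_gS_ne i h
      · exact h.elim
      · exact mem_gS_negone h
    · rw [Set.mem_singleton_iff] at h
      rw [h]
      exact mem_gS_one trivial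

lemma gS_union_negstd (p m : Fin n → Prop) (gp gm : Prop) (j₀ : Fin n) :
    gS n p (fun i => m i ∨ i = j₀) gp gm = gS n p m gp gm ∪ {-stdBasis j₀} := by
  ext x
  constructor
  · rintro (⟨i,h,rfl⟩|⟨i,h,rfl⟩|⟨h,rfl⟩|⟨h,rfl⟩)
    · exact Or.inl (mem_gS_e i h)
    · rcases h with h | rfl
      · exact Or.inl (mem_gS_ne i h)
      · exact Or.inr rfl
    · exact Or.inl (mem_gS_one h)
    · exact Or.inl (mem_gS_negone h)
  · rintro (h|h)
    · rcases h with ⟨i,h,rfl⟩|⟨i,h,rfl⟩|⟨h,rfl⟩|⟨h,rfl⟩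
      · exact mem_gS_e i h
      · exact mem_gS_ne i (Or.inl h)
      · exact mem_gS_one h
      · exact mem_gS_negone h
    · rw [Set.mem_singleton_iff] at h
      rw [h]
      exact mem_gS_ne j₀ (Or.inr rfl)

lemma neg_const_eq (c : ℝ) : -(fun _ : Fin n => c) = (fun _ : Fin n => -c) := by
  funext q; simp

lemma neg_gS (p m : Fin n → Prop) (gp gm : Prop) :
    (fun x : Fin n → ℝ => -x) '' gS n p m gp gm = gS n m p gm gp := by
  ext x
  constructor
  · rintro ⟨y, hy, rfl⟩
    rcases hy with ⟨i,h,rfl⟩|⟨i,h,rfl⟩|⟨h,rfl⟩|⟨h,rfl⟩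
    · exact mem_gS_ne i h
    · show -(-stdBasis i) ∈ _
      rw [neg_neg]; exact mem_gS_e i h
    · show -(fun _ : Fin n => (1:ℝ)) ∈ _
      rw [neg_const_eq]
      exact mem_gS_negone h
    · show -(fun _ : Fin n => (-1:ℝ)) ∈ _
      rw [neg_const_eq, show (fun _ : Fin n => -(-1:ℝ)) = (fun _ : Fin n => (1:ℝ)) from by
        norm_num]
      exact mem_gS_one h
  · intro hx
    refine ⟨-x, ?_, neg_neg x⟩
    rcases hx with ⟨i,h,rfl⟩|⟨i,h,rfl⟩|⟨h,rfl⟩|⟨h,rfl⟩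
    · exact mem_gS_ne i h
    · rw [neg_neg]; exact mem_gS_e i h
    · rw [neg_const_eq]
      exact mem_gS_negone h
    · rw [neg_const_eq, show (fun _ : Fin n => -(-1:ℝ)) = (fun _ : Fin n => (1:ℝ)) from by
        norm_num]
      exact mem_gS_one h

/-! ### non-membership lemmas -/

lemma negone_not_mem_gS (hn : 2 ≤ n) (p m : Fin n → Prop) :
    (fun _ : Fin n => (-1:ℝ)) ∉ gS n p m True False := by
  rintro (⟨i,_,h⟩|⟨i,_,h⟩|⟨_,h⟩|⟨h,_⟩)
  · exact stdBasis_ne_const hn i (-1) (by norm_num) h.symm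
  · exact neg_stdBasis_ne_const hn i (-1) (by norm_num) h.symm
  · exact const_ne_const (by norm_num : (-1:ℝ) ≠ 1) (by omega) h
  · exact h

lemma one_not_mem_gS (hn : 2 ≤ n) (p m : Fin n → Prop) :
    (fun _ : Fin n => (1:ℝ)) ∉ gS n p m False True := by
  rintro (⟨i,_,h⟩|⟨i,_,h⟩|⟨h,_⟩|⟨_,h⟩)
  · exact stdBasis_ne_const hn i 1 (by norm_num) h.symm
  · exact neg_stdBasis_ne_const hn i 1 (by norm_num) h.symm
  · exact h
  · exact const_ne_const (by norm_num : (1:ℝ) ≠ -1) (by omega) h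

lemma negstd_not_mem_gS (hn : 2 ≤ n) (p : Fin n → Prop) {m : Fin n → Prop} {j₀ : Fin n}
    (hm : ¬ m j₀) : -stdBasis j₀ ∉ gS n p m False True := by
  rintro (⟨i,_,h⟩|⟨i,hi,h⟩|⟨h,_⟩|⟨_,h⟩)
  · exact stdBasis_ne_neg i j₀ h.symm
  · have h2 : stdBasis j₀ = stdBasis i := by
      have := congrArg (fun v : Fin n → ℝ => -v) h
      simpa using this
    have h3 : j₀ = i := stdBasis_injective h2
    subst h3
    exact hm hi
  · exact h
  · exact neg_stdBasis_ne_const hn j₀ (-1) (by norm_num) h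

/-! ### equivalence and step helpers -/

lemma unimodularEquiv_of_eq {Q Q' : Set (Fin n → ℝ)} (h : Q = Q') : UnimodularEquiv Q Q' := by
  refine ⟨AffineMap.id ℝ (Fin n → ℝ), ?_, ?_⟩
  · simp
  · simp [h]

lemma unimodularEquiv_neg_hull (s : Set (Fin n → ℝ)) :
    UnimodularEquiv (convexHull ℝ s) (convexHull ℝ ((fun x : Fin n → ℝ => -x) '' s)) := by
  refine ⟨(-(LinearMap.id : (Fin n → ℝ) →ₗ[ℝ] (Fin n → ℝ))).toAffineMap, ?_, ?_⟩
  · ext y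
    constructor
    · rintro ⟨x, hx, rfl⟩
      intro i
      obtain ⟨mi, hmi⟩ := hx i
      exact ⟨-mi, by simp [hmi]⟩
    · intro hy
      refine ⟨-y, fun i => ?_, by simp⟩
      obtain ⟨mi, hmi⟩ := hy i
      exact ⟨-mi, by simp [hmi]⟩
  · rw [AffineMap.image_convexHull]
    have himg : ⇑((-(LinearMap.id : (Fin n → ℝ) →ₗ[ℝ] (Fin n → ℝ))).toAffineMap)
        = fun x : Fin n → ℝ => -x := by
      funext x; simp
    rw [himg]

lemma istep_of_union {s t : Set (Fin n → ℝ)} {w : Fin n → ℝ}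
    (hw : IsLatticePoint w) (hnm : w ∉ t) (he : s = t ∪ {w})
    (hvs : vertexSet (convexHull ℝ s) = s) (hvt : vertexSet (convexHull ℝ t) = t) :
    IStep (convexHull ℝ s) (convexHull ℝ t) :=
  Or.inr ⟨w, hw, by rw [hvt]; exact hnm, by rw [hvs, hvt, he]⟩

end SFP

/-- For every `k ≥ 1`, the smooth Fano `2k`-polytopes `V^{2k}`,
`Ṽ^{2k}` and `T^{2k}` are pairwise I-equivalent. -/
theorem V_Vtilde_T_pairwise_IEquiv (k : ℕ) (hk : 1 ≤ k) :
    IsSmoothFano (Vpoly (2 * k)) ∧ IsSmoothFano (Vtildepoly (2 * k)) ∧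
    IsSmoothFano (Tpoly (2 * k)) ∧
    IEquiv (Vpoly (2 * k)) (Vtildepoly (2 * k)) ∧
    IEquiv (Vpoly (2 * k)) (Tpoly (2 * k)) ∧
    IEquiv (Vtildepoly (2 * k)) (Tpoly (2 * k)) := by
  classical
  set n := 2 * k with hndef
  have hn2 : 2 ≤ n := by omega
  have hev : Even n := ⟨k, by omega⟩
  -- predicates
  set pT : Fin n → Prop := fun _ => True with hpT
  set mB : ℕ → (Fin n → Prop) := fun j i => (i : ℕ) < j with hmB
  set SV := SFP.gS n pT pT True True with hSV
  set SVt := SFP.gS n pT pT True False with hSVt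
  set SB : ℕ → Set (Fin n → ℝ) := fun j => SFP.gS n pT (mB j) False True with hSB
  have hSBn : SB n = SFP.gS n pT pT False True :=
    SFP.gS_ext (fun _ => Iff.rfl) (fun i => ⟨fun _ => trivial, fun _ => i.isLt⟩)
      Iff.rfl Iff.rfl
  -- generator set identifications
  have hVg : Set.range (stdBasis (n := n)) ∪ Set.range (fun i => -stdBasis (n := n) i) ∪
      {fun _ => (1 : ℝ), fun _ => (-1 : ℝ)} = SV := by
    ext x
    constructor
    · rintro ((⟨i, rfl⟩ | ⟨i, rfl⟩) | h)
      · exact SFP.mem_gS_e i trivial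
      · exact SFP.mem_gS_ne i trivial
      · rcases Set.mem_insert_iff.1 h with rfl | h
        · exact SFP.mem_gS_one trivial
        · rw [Set.mem_singleton_iff] at h
          rw [h]; exact SFP.mem_gS_negone trivial
    · rintro (⟨i,_,rfl⟩|⟨i,_,rfl⟩|⟨_,rfl⟩|⟨_,rfl⟩)
      · exact Or.inl (Or.inl ⟨i, rfl⟩)
      · exact Or.inl (Or.inr ⟨i, rfl⟩)
      · exact Or.inr (Set.mem_insert _ _)
      · exact Or.inr (Set.mem_insert_of_mem _ rfl)
  have hVtg : Set.range (stdBasis (n := n)) ∪ Set.range (fun i => -stdBasis (n := n) i) ∪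
      {fun _ => (1 : ℝ)} = SVt := by
    ext x
    constructor
    · rintro ((⟨i, rfl⟩ | ⟨i, rfl⟩) | h)
      · exact SFP.mem_gS_e i trivial
      · exact SFP.mem_gS_ne i trivial
      · rw [Set.mem_singleton_iff] at h
        rw [h]; exact SFP.mem_gS_one trivial
    · rintro (⟨i,_,rfl⟩|⟨i,_,rfl⟩|⟨_,rfl⟩|⟨h,_⟩)
      · exact Or.inl (Or.inl ⟨i, rfl⟩)
      · exact Or.inl (Or.inr ⟨i, rfl⟩)
      · exact Or.inr rfl
      · exact h.elim
  have hTg : Set.range (stdBasis (n := n)) ∪ {fun _ => (-1 : ℝ)} = SB 0 := by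
    ext x
    constructor
    · rintro (⟨i, rfl⟩ | h)
      · exact SFP.mem_gS_e i trivial
      · rw [Set.mem_singleton_iff] at h
        rw [h]; exact SFP.mem_gS_negone trivial
    · rintro (⟨i,_,rfl⟩|⟨i,hi,rfl⟩|⟨h,_⟩|⟨_,rfl⟩)
      · exact Or.inl ⟨i, rfl⟩
      · exact absurd hi (Nat.not_lt_zero _)
      · exact h.elim
      · exact Or.inr rfl
  have hVpoly : Vpoly n = convexHull ℝ SV := by
    rw [Vpoly, hVg]
  have hVtpoly : Vtildepoly n = convexHull ℝ SVt := by
    rw [Vtildepoly, hVtg]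
  have hTpoly : Tpoly n = convexHull ℝ (SB 0) := by
    rw [Tpoly, hTg]
  -- smoothness
  have hsfV : IsSmoothFano (convexHull ℝ SV) :=
    SFP.isSmoothFano_gS hn2 hev pT pT True True (Or.inl ⟨trivial, fun _ => trivial⟩)
  have hsfVt : IsSmoothFano (convexHull ℝ SVt) :=
    SFP.isSmoothFano_gS hn2 hev pT pT True False (Or.inr ⟨trivial, fun _ => trivial⟩)
  have hsfB : ∀ j : ℕ, IsSmoothFano (convexHull ℝ (SB j)) := fun j =>
    SFP.isSmoothFano_gS hn2 hev pT (mB j) False True (Or.inl ⟨trivial, fun _ => trivial⟩)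
  -- vertex sets
  have hvV : vertexSet (convexHull ℝ SV) = SV := SFP.vertexSet_gS hn2 pT pT True True
  have hvVt : vertexSet (convexHull ℝ SVt) = SVt := SFP.vertexSet_gS hn2 pT pT True False
  have hvB : ∀ j : ℕ, vertexSet (convexHull ℝ (SB j)) = SB j := fun j =>
    SFP.vertexSet_gS hn2 pT (mB j) False True
  -- union decompositions
  have hu1 : SV = SVt ∪ {fun _ : Fin n => (-1:ℝ)} := SFP.gS_union_negone pT pT True
  have hu2 : SV = SB n ∪ {fun _ : Fin n => (1:ℝ)} := by
    rw [hSBn]; exact SFP.gS_union_one pT pT True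
  have hu3 : ∀ (j : ℕ) (hj : j < n), SB (j+1) = SB j ∪ {-stdBasis ⟨j, hj⟩} := by
    intro j hj
    have h1 : SB (j+1) = SFP.gS n pT (fun i => mB j i ∨ i = ⟨j, hj⟩) False True := by
      apply SFP.gS_ext (fun _ => Iff.rfl) ?_ Iff.rfl Iff.rfl
      intro i
      have hval : ((⟨j, hj⟩ : Fin n) : ℕ) = j := rfl
      rw [hmB]
      constructor
      · intro h
        by_cases he : (i : ℕ) = j
        · exact Or.inr (Fin.ext (by rw [hval]; exact he))
        · exact Or.inl (by omega)
      · rintro (h | rfl)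
        · omega
        · exact lt_of_eq_of_lt hval (Nat.lt_succ_self j)
    rw [h1, SFP.gS_union_negstd]
  -- non-membership facts
  have hnm1 : (fun _ : Fin n => (-1:ℝ)) ∉ SVt := SFP.negone_not_mem_gS hn2 pT pT
  have hnm2 : (fun _ : Fin n => (1:ℝ)) ∉ SB n := SFP.one_not_mem_gS hn2 pT (mB n)
  have hnm3 : ∀ (j : ℕ) (hj : j < n), -stdBasis ⟨j, hj⟩ ∉ SB j := fun j hj =>
    SFP.negstd_not_mem_gS hn2 pT (by rw [hmB]; exact Nat.lt_irrefl j)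
  -- lattice points
  have hlat1 : IsLatticePoint (fun _ : Fin n => (-1:ℝ)) :=
    SFP.gS_lattice (SFP.mem_gS_negone (p := pT) (m := pT) (gp := True) trivial)
  have hlat2 : IsLatticePoint (fun _ : Fin n => (1:ℝ)) :=
    SFP.gS_lattice (SFP.mem_gS_one (p := pT) (m := pT) (gm := True) trivial)
  have hlat3 : ∀ (j : ℕ) (hj : j < n), IsLatticePoint (-stdBasis (⟨j, hj⟩ : Fin n)) :=
    fun j hj => SFP.gS_lattice
      (SFP.mem_gS_ne (p := pT) (m := pT) (gp := True) (gm := True) ⟨j, hj⟩ trivial)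
  -- the steps
  have hstep1 : IStep (convexHull ℝ SV) (convexHull ℝ SVt) :=
    SFP.istep_of_union hlat1 hnm1 hu1 hvV hvVt
  have hstep2 : IStep (convexHull ℝ SV) (convexHull ℝ (SB n)) :=
    SFP.istep_of_union hlat2 hnm2 hu2 hvV (hvB n)
  have hstep3 : ∀ (j : ℕ) (hj : j < n),
      IStep (convexHull ℝ (SB (j+1))) (convexHull ℝ (SB j)) := fun j hj =>
    SFP.istep_of_union (hlat3 j hj) (hnm3 j hj) (hu3 j hj) (hvB (j+1)) (hvB j)
  -- the negation equivalence Ṽ ≃ SB n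
  have hequivVt : UnimodularEquiv (Vtildepoly n) (convexHull ℝ (SB n)) := by
    rw [hVtpoly]
    have h1 := SFP.unimodularEquiv_neg_hull SVt
    have h2 : ((fun x : Fin n → ℝ => -x) '' SVt) = SB n := by
      rw [hSVt, SFP.neg_gS, hSBn]
    rwa [h2] at h1
  refine ⟨by rw [hVpoly]; exact hsfV, by rw [hVtpoly]; exact hsfVt,
    by rw [hTpoly]; exact hsfB 0, ?_, ?_, ?_⟩
  · -- V ≡ Ṽ
    set c1 : Fin 2 → Set (Fin n → ℝ) :=
      fun i => if (i : ℕ) = 0 then convexHull ℝ SV else convexHull ℝ SVt with hc1def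
    refine ⟨1, c1, ?_, ?_, ?_, ?_⟩
    · intro i
      simp only [hc1def]
      by_cases h : (i : ℕ) = 0
      · rw [if_pos h]; exact hsfV
      · rw [if_neg h]; exact hsfVt
    · have h : c1 0 = convexHull ℝ SV := by simp [hc1def]
      rw [h]
      exact SFP.unimodularEquiv_of_eq hVpoly
    · have h : c1 (Fin.last 1) = convexHull ℝ SVt := by simp [hc1def, Fin.last]
      rw [h]
      exact SFP.unimodularEquiv_of_eq hVtpoly
    · intro i
      have hi : i = 0 := Subsingleton.elim i 0
      subst hi
      have h1 : c1 (Fin.castSucc 0) = convexHull ℝ SV := by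
        simp [hc1def]
      have h2 : c1 (Fin.succ 0) = convexHull ℝ SVt := by
        simp [hc1def, Fin.succ]
      rw [h1, h2]
      exact hstep1
  · -- V ≡ T
    set c2 : Fin (n+2) → Set (Fin n → ℝ) :=
      fun i => if (i : ℕ) = 0 then convexHull ℝ SV
        else convexHull ℝ (SB (n + 1 - (i : ℕ))) with hc2def
    refine ⟨n+1, c2, ?_, ?_, ?_, ?_⟩
    · intro i
      simp only [hc2def]
      by_cases h : (i : ℕ) = 0
      · rw [if_pos h]; exact hsfV
      · rw [if_neg h]; exact hsfB _
    · have h : c2 0 = convexHull ℝ SV := by simp [hc2def]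
      rw [h]
      exact SFP.unimodularEquiv_of_eq hVpoly
    · have h : c2 (Fin.last (n+1)) = convexHull ℝ (SB 0) := by
        simp [hc2def]
      rw [h]
      exact SFP.unimodularEquiv_of_eq hTpoly
    · intro i
      have hval : (i : ℕ) < n + 1 := i.isLt
      have hcs : ((i.castSucc : Fin (n+2)) : ℕ) = (i : ℕ) := Fin.coe_castSucc i
      have hss : ((i.succ : Fin (n+2)) : ℕ) = (i : ℕ) + 1 := Fin.val_succ i
      by_cases ht : (i : ℕ) = 0
      · have h1 : c2 i.castSucc = convexHull ℝ SV := by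
          simp only [hc2def, hcs]; rw [if_pos ht]
        have h2 : c2 i.succ = convexHull ℝ (SB n) := by
          simp [hc2def, hss, ht]
        rw [h1, h2]
        exact hstep2
      · have h1 : c2 i.castSucc = convexHull ℝ (SB ((n - (i : ℕ)) + 1)) := by
          simp only [hc2def, hcs]
          rw [if_neg ht, show n + 1 - (i : ℕ) = (n - (i : ℕ)) + 1 from by omega]
        have h2 : c2 i.succ = convexHull ℝ (SB (n - (i : ℕ))) := by
          simp only [hc2def, hss]
          rw [if_neg (by omega), show n + 1 - ((i : ℕ) + 1) = n - (i : ℕ) from by omega]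
        rw [h1, h2]
        exact hstep3 (n - (i : ℕ)) (by omega)
  · -- Ṽ ≡ T
    set c3 : Fin (n+1) → Set (Fin n → ℝ) :=
      fun i => convexHull ℝ (SB (n - (i : ℕ))) with hc3def
    refine ⟨n, c3, ?_, ?_, ?_, ?_⟩
    · intro i
      simp only [hc3def]
      exact hsfB _
    · have h : c3 0 = convexHull ℝ (SB n) := by simp [hc3def]
      rw [h]
      exact hequivVt
    · have h : c3 (Fin.last n) = convexHull ℝ (SB 0) := by simp [hc3def]
      rw [h]
      exact SFP.unimodularEquiv_of_eq hTpoly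
    · intro i
      have hval : (i : ℕ) < n := i.isLt
      have hcs : ((i.castSucc : Fin (n+1)) : ℕ) = (i : ℕ) := Fin.coe_castSucc i
      have hss : ((i.succ : Fin (n+1)) : ℕ) = (i : ℕ) + 1 := Fin.val_succ i
      have h1 : c3 i.castSucc = convexHull ℝ (SB ((n - ((i : ℕ) + 1)) + 1)) := by
        simp only [hc3def, hcs]
        rw [show n - (i : ℕ) = (n - ((i : ℕ) + 1)) + 1 from by omega]
      have h2 : c3 i.succ = convexHull ℝ (SB (n - ((i : ℕ) + 1))) := by
        simp only [hc3def, hss]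
      rw [h1, h2]
      exact hstep3 (n - ((i : ℕ) + 1)) (by omega)
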